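/- Let x_1, …, x_n be independent random vectors in ℝ^d with common mean μ* and covariance matrices Σ_1, …, Σ_n, and let λ_(k) denote the k-th smallest value among {λ_max(Σ_i)}_{i=1}^n. Fix α with 2/3 < α ≤ 1 and set κ = 2(1−α)/α < 1. Then with probability at least 1 − 1/⌈αn⌉, the following holds simultaneously for every μ ∈ ℝ^d: if S is any subset of size ⌈αn⌉ minimizing Σ_{i∈S} ‖x_i − μ‖₂² over all subsets of size ⌈αn⌉, and μ' = (1/⌈αn⌉) Σ_{i∈S} x_i, then ‖μ' − μ*‖₂ ≤ κ·‖μ − μ*‖₂ + 2√(d·λ_(⌈αn⌉)). -/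

import Mathlib

set_option autoImplicit false

open MeasureTheory ProbabilityTheory Finset
open scoped ENNReal NNReal

/-- The largest eigenvalue of a matrix. -/
noncomputable def lambdaMax {d : ℕ} (M : Matrix (Fin d) (Fin d) ℝ) : ℝ :=
  sSup {r : ℝ | ∃ v : Fin d → ℝ, v ≠ 0 ∧ M.mulVec v = r • v}

/-- `orderStat f k` is the `k`-th smallest (0-indexed) value among `f 0, …, f (n-1)`. -/
noncomputable def orderStat {n : ℕ} (f : Fin n → ℝ) (k : Fin n) : ℝ := f (Tuple.sort f k)

lemma ceil_pred_lt (α : ℝ) (n : ℕ) (hn : 0 < n) (hα1 : α ≤ 1) : ⌈α * (n : ℝ)⌉₊ - 1 < n := by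
  have h : ⌈α * (n : ℝ)⌉₊ ≤ n := by
    rw [Nat.ceil_le]
    calc α * (n : ℝ) ≤ 1 * (n : ℝ) := by nlinarith [Nat.cast_nonneg (α := ℝ) n]
      _ = (n : ℝ) := one_mul _
  omega

lemma lambdaMax_bddAbove {d : ℕ} (M : Matrix (Fin d) (Fin d) ℝ) :
    BddAbove {r : ℝ | ∃ v : Fin d → ℝ, v ≠ 0 ∧ M.mulVec v = r • v} := by
  refine ⟨‖LinearMap.toContinuousLinearMap M.mulVecLin‖, ?_⟩
  rintro r ⟨v, hv, hMv⟩
  have h1 : ‖M.mulVec v‖ ≤ ‖LinearMap.toContinuousLinearMap M.mulVecLin‖ * ‖v‖ := by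
    simpa using (LinearMap.toContinuousLinearMap M.mulVecLin).le_opNorm v
  rw [hMv, norm_smul] at h1
  have hvpos : 0 < ‖v‖ := norm_pos_iff.mpr hv
  have h2 : ‖r‖ ≤ ‖LinearMap.toContinuousLinearMap M.mulVecLin‖ :=
    le_of_mul_le_mul_right h1 hvpos
  exact le_trans (le_abs_self r) h2

lemma eigen_le_lambdaMax {d : ℕ} {M : Matrix (Fin d) (Fin d) ℝ} (hM : M.IsHermitian) (i : Fin d) :
    hM.eigenvalues i ≤ lambdaMax M :=
  le_csSup (lambdaMax_bddAbove M)
    ⟨_, fun h => hM.eigenvectorBasis.orthonormal.ne_zero i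
      (by simpa using congrArg (WithLp.toLp 2) h), hM.mulVec_eigenvectorBasis i⟩

lemma trace_le_lambdaMax {d : ℕ} {M : Matrix (Fin d) (Fin d) ℝ} (hM : M.IsHermitian) :
    M.trace ≤ (d : ℝ) * lambdaMax M := by
  classical
  have htr : M.trace = ∑ i, hM.eigenvalues i := by
    simpa using hM.trace_eq_sum_eigenvalues
  rw [htr]
  calc ∑ i, hM.eigenvalues i ≤ ∑ _i : Fin d, lambdaMax M :=
        Finset.sum_le_sum fun i _ => eigen_le_lambdaMax hM i
    _ = (d : ℝ) * lambdaMax M := by simp [mul_comm]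

set_option maxHeartbeats 1000000 in
theorem stmt4 {Ω : Type*} [MeasurableSpace Ω] (P : Measure Ω) [IsProbabilityMeasure P]
    (n d : ℕ) (hn : 0 < n)
    (X : Fin n → Ω → EuclideanSpace ℝ (Fin d))
    (μstar : EuclideanSpace ℝ (Fin d)) (Sigm : Fin n → Matrix (Fin d) (Fin d) ℝ)
    (hindep : iIndepFun X P)
    (hL2 : ∀ i, MemLp (X i) 2 P)
    (hmean : ∀ i, ∫ ω, X i ω ∂P = μstar)
    (hcov : ∀ i, ∀ j k : Fin d,
      Sigm i j k = ∫ ω, (X i ω j - μstar j) * (X i ω k - μstar k) ∂P)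
    (α : ℝ) (hα : 2 / 3 < α) (hα1 : α ≤ 1)
    (κ : ℝ) (hκ : κ = 2 * (1 - α) / α) :
    κ < 1 ∧
    P {ω | ∀ μ : EuclideanSpace ℝ (Fin d), ∀ S : Finset (Fin n),
        S.card = ⌈α * (n : ℝ)⌉₊ →
        (∀ S' : Finset (Fin n), S'.card = ⌈α * (n : ℝ)⌉₊ →
          ∑ i ∈ S, ‖X i ω - μ‖ ^ 2 ≤ ∑ i ∈ S', ‖X i ω - μ‖ ^ 2) →
        ‖(⌈α * (n : ℝ)⌉₊ : ℝ)⁻¹ • (∑ i ∈ S, X i ω) - μstar‖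
          ≤ κ * ‖μ - μstar‖
            + 2 * Real.sqrt (d * orderStat (fun i => lambdaMax (Sigm i))
                ⟨⌈α * (n : ℝ)⌉₊ - 1, ceil_pred_lt α n hn hα1⟩)}
      ≥ 1 - 1 / (⌈α * (n : ℝ)⌉₊ : ℝ≥0∞) := by
  classical
  have hα0 : (0:ℝ) < α := by linarith
  have hκ1 : κ < 1 := by rw [hκ, div_lt_one hα0]; linarith
  refine ⟨hκ1, ?_⟩
  set m : ℕ := ⌈α * (n : ℝ)⌉₊ with hm
  simp only [← hm]
  have hmpos : 0 < m := Nat.ceil_pos.mpr (mul_pos hα0 (Nat.cast_pos.mpr hn))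
  have hmR : (0:ℝ) < m := Nat.cast_pos.mpr hmpos
  have hmn : m ≤ n := by
    rw [hm, Nat.ceil_le]
    calc α * (n:ℝ) ≤ 1 * (n:ℝ) := by nlinarith [Nat.cast_nonneg (α := ℝ) n]
      _ = (n:ℝ) := one_mul _
  have hαnm : α * (n:ℝ) ≤ m := by rw [hm]; exact Nat.le_ceil _
  set f : Fin n → ℝ := fun i => lambdaMax (Sigm i) with hf
  set k : Fin n := ⟨m - 1, ceil_pred_lt α n hn hα1⟩ with hk
  set lam : ℝ := orderStat f k with hlam
  set I : Finset (Fin n) := (Finset.Iic k).image (Tuple.sort f) with hI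
  have hIcard : I.card = m := by
    rw [hI, Finset.card_image_of_injective _ (Equiv.injective _), Fin.card_Iic]
    simp only [hk]
    omega
  have hflam : ∀ i ∈ I, f i ≤ lam := by
    intro i hi
    rw [hI, Finset.mem_image] at hi
    obtain ⟨j, hj, rfl⟩ := hi
    rw [Finset.mem_Iic] at hj
    simpa [hlam, orderStat] using Tuple.monotone_sort f hj
  -- the functions aᵢ
  set a : Fin n → Ω → ℝ := fun i ω => ‖X i ω - μstar‖ with ha
  have mem2 : ∀ i, MemLp (a i) 2 P := fun i => ((hL2 i).sub (memLp_const μstar)).norm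
  have int1 : ∀ i, Integrable (a i) P := fun i => (mem2 i).integrable one_le_two
  have anonneg : ∀ i ω, 0 ≤ a i ω := fun i ω => norm_nonneg _
  have memco : ∀ i (j : Fin d), MemLp (fun ω => X i ω j - μstar j) 2 P := by
    intro i j
    have h := (EuclideanSpace.proj (𝕜 := ℝ) j).comp_memLp' ((hL2 i).sub (memLp_const μstar))
    have he : (fun ω => X i ω j - μstar j)
        = (⇑(EuclideanSpace.proj (𝕜 := ℝ) j) ∘ fun ω => X i ω - μstar) := by
      funext ω; simp [Function.comp]
    rwa [he]
  have hE2 : ∀ i, ∫ ω, (a i ω)^2 ∂P = (Sigm i).trace := by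
    intro i
    have hnorm : ∀ ω, (a i ω)^2 = ∑ j : Fin d, (X i ω j - μstar j)^2 := by
      intro ω
      rw [ha]
      simp only
      rw [EuclideanSpace.norm_eq, Real.sq_sqrt (by positivity)]
      refine Finset.sum_congr rfl fun j _ => ?_
      rw [Real.norm_eq_abs, sq_abs]
      simp
    calc ∫ ω, (a i ω)^2 ∂P = ∫ ω, ∑ j : Fin d, (X i ω j - μstar j)^2 ∂P := by
          simp_rw [hnorm]
      _ = ∑ j : Fin d, ∫ ω, (X i ω j - μstar j)^2 ∂P :=
          integral_finset_sum _ fun j _ => (memco i j).integrable_sq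
      _ = ∑ j : Fin d, Sigm i j j := by
          refine Finset.sum_congr rfl fun j _ => ?_
          rw [hcov i j j]
          simp only [pow_two]
      _ = (Sigm i).trace := by simp [Matrix.trace, Matrix.diag]
  have herm : ∀ i, (Sigm i).IsHermitian := by
    intro i
    show (Sigm i).conjTranspose = Sigm i
    ext j l
    rw [Matrix.conjTranspose_apply]
    rw [show star (Sigm i l j) = Sigm i l j from rfl]
    rw [hcov i l j, hcov i j l]
    exact integral_congr_ae (Filter.Eventually.of_forall fun ω => mul_comm _ _)
  have htrnn : ∀ i, 0 ≤ (Sigm i).trace := by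
    intro i
    rw [← hE2 i]
    exact integral_nonneg fun ω => sq_nonneg _
  have hlameq : lam = lambdaMax (Sigm (Tuple.sort f k)) := by
    rw [hlam]; rfl
  have hlam0 : 0 ≤ (d:ℝ) * lam := by
    rw [hlameq]
    exact le_trans (htrnn _) (trace_le_lambdaMax (herm _))
  have hE2le : ∀ i ∈ I, ∫ ω, (a i ω)^2 ∂P ≤ (d:ℝ) * lam := by
    intro i hi
    rw [hE2 i]
    refine le_trans (trace_le_lambdaMax (herm i)) ?_
    have h1 : lambdaMax (Sigm i) ≤ lam := by
      have := hflam i hi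
      simpa [hf] using this
    have hd : (0:ℝ) ≤ d := Nat.cast_nonneg d
    nlinarith
  have hEa : ∀ i ∈ I, ∫ ω, a i ω ∂P ≤ Real.sqrt ((d:ℝ) * lam) := by
    intro i hi
    rw [Real.le_sqrt (integral_nonneg (anonneg i)) hlam0]
    have hv := variance_nonneg (a i) P
    rw [variance_eq_sub (mem2 i)] at hv
    simp_rw [Pi.pow_apply] at hv
    have := hE2le i hi
    nlinarith
  -- pairwise independence of the aᵢ and variance bound
  have hmeasnorm : Measurable fun x : EuclideanSpace ℝ (Fin d) => ‖x - μstar‖ :=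
    (continuous_id.sub continuous_const).norm.measurable
  have hpair : Set.Pairwise ↑I fun i j => IndepFun (a i) (a j) P := by
    intro i _ j _ hij
    exact (hindep.indepFun hij).comp hmeasnorm hmeasnorm
  have hvarle : variance (∑ i ∈ I, a i) P ≤ (m:ℝ) * ((d:ℝ) * lam) := by
    rw [IndepFun.variance_sum (fun i _ => mem2 i) hpair]
    calc ∑ i ∈ I, variance (a i) P ≤ ∑ _i ∈ I, (d:ℝ) * lam := by
          refine Finset.sum_le_sum fun i hi => ?_
          refine le_trans (variance_le_expectation_sq (mem2 i).aestronglyMeasurable) ?_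
          have h := hE2le i hi
          simpa [Pi.pow_apply] using h
      _ = (m:ℝ) * ((d:ℝ) * lam) := by rw [Finset.sum_const, hIcard, nsmul_eq_mul]
  have hETle : (∫ ω, (∑ i ∈ I, a i) ω ∂P) ≤ (m:ℝ) * Real.sqrt ((d:ℝ) * lam) := by
    have h1 : (∫ ω, (∑ i ∈ I, a i) ω ∂P) = ∑ i ∈ I, ∫ ω, a i ω ∂P := by
      simp_rw [Finset.sum_apply]
      exact integral_finset_sum _ fun i _ => int1 i
    rw [h1]
    calc ∑ i ∈ I, ∫ ω, a i ω ∂P ≤ ∑ _i ∈ I, Real.sqrt ((d:ℝ) * lam) :=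
          Finset.sum_le_sum fun i hi => hEa i hi
      _ = (m:ℝ) * Real.sqrt ((d:ℝ) * lam) := by rw [Finset.sum_const, hIcard, nsmul_eq_mul]
  -- the good event
  set A : Set Ω := {ω | ∑ i ∈ I, a i ω ≤ 2 * (m:ℝ) * Real.sqrt ((d:ℝ) * lam)} with hAdef
  have hAc : P Aᶜ ≤ 1 / (m : ℝ≥0∞) := by
    rcases eq_or_lt_of_le hlam0 with h0 | hpos
    · -- degenerate case : d * lam = 0
      have hae : ∀ i ∈ I, ∀ᵐ ω ∂P, a i ω = 0 := by
        intro i hi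
        have hz0 := hE2le i hi
        rw [← h0] at hz0
        have hz : ∫ ω, (a i ω)^2 ∂P = 0 :=
          le_antisymm hz0 (integral_nonneg fun ω => sq_nonneg _)
        have h2 := (integral_eq_zero_iff_of_nonneg (fun ω => sq_nonneg (a i ω))
          (mem2 i).integrable_sq).mp hz
        filter_upwards [h2] with ω hω
        exact (pow_eq_zero_iff two_ne_zero).mp hω
      have hfull : ∀ᵐ ω ∂P, ω ∈ A := by
        have h2 : ∀ᵐ ω ∂P, ∀ i ∈ I, a i ω = 0 :=
          (MeasureTheory.ae_ball_iff I.countable_toSet).mpr hae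
        filter_upwards [h2] with ω hω
        have hsum : ∑ i ∈ I, a i ω = 0 := Finset.sum_eq_zero hω
        show ∑ i ∈ I, a i ω ≤ 2 * (m:ℝ) * Real.sqrt ((d:ℝ) * lam)
        rw [hsum]
        positivity
      have h0' : P Aᶜ = 0 := by
        have := ae_iff.mp hfull
        exact this
      simp [h0']
    · -- Chebyshev
      have hc : 0 < (m:ℝ) * Real.sqrt ((d:ℝ) * lam) :=
        mul_pos hmR (Real.sqrt_pos.mpr hpos)
      have hcheb := meas_ge_le_variance_div_sq (μ := P)
        (memLp_finsetSum' I fun i _ => mem2 i) hc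
      have hsub : Aᶜ ⊆ {ω | (m:ℝ) * Real.sqrt ((d:ℝ) * lam)
          ≤ |(∑ i ∈ I, a i) ω - ∫ ω', (∑ i ∈ I, a i) ω' ∂P|} := by
        intro ω hω
        have hω' : ¬ (∑ i ∈ I, a i ω ≤ 2 * (m:ℝ) * Real.sqrt ((d:ℝ) * lam)) := hω
        push_neg at hω'
        have hT : (∑ i ∈ I, a i) ω = ∑ i ∈ I, a i ω := Finset.sum_apply _ _ _
        show (m:ℝ) * Real.sqrt ((d:ℝ) * lam) ≤ |(∑ i ∈ I, a i) ω - ∫ ω', (∑ i ∈ I, a i) ω' ∂P|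
        rw [hT]
        have : (m:ℝ) * Real.sqrt ((d:ℝ) * lam)
            ≤ (∑ i ∈ I, a i ω) - ∫ ω', (∑ i ∈ I, a i) ω' ∂P := by linarith
        exact le_trans this (le_abs_self _)
      have hsq : ((m:ℝ) * Real.sqrt ((d:ℝ) * lam))^2 = (m:ℝ)^2 * ((d:ℝ)*lam) := by
        rw [mul_pow, Real.sq_sqrt hlam0]
      calc P Aᶜ ≤ P {ω | (m:ℝ) * Real.sqrt ((d:ℝ) * lam)
              ≤ |(∑ i ∈ I, a i) ω - ∫ ω', (∑ i ∈ I, a i) ω' ∂P|} := measure_mono hsub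
        _ ≤ ENNReal.ofReal (variance (∑ i ∈ I, a i) P / ((m:ℝ) * Real.sqrt ((d:ℝ)*lam))^2) :=
            hcheb
        _ ≤ ENNReal.ofReal (1 / (m:ℝ)) := by
            apply ENNReal.ofReal_le_ofReal
            rw [hsq, div_le_div_iff₀ (by positivity) hmR]
            calc variance (∑ i ∈ I, a i) P * (m:ℝ) ≤ ((m:ℝ) * ((d:ℝ)*lam)) * (m:ℝ) := by
                  nlinarith [hvarle, hmR.le]
              _ = 1 * ((m:ℝ)^2 * ((d:ℝ)*lam)) := by ring
        _ = 1 / (m : ℝ≥0∞) := by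
            rw [one_div, one_div, ENNReal.ofReal_inv_of_pos hmR, ENNReal.ofReal_natCast]
  -- conclusion
  rw [ge_iff_le, tsub_le_iff_right]
  have h0 : (1:ℝ≥0∞) ≤ P A + P Aᶜ := by
    rw [← measure_univ (μ := P), ← Set.union_compl_self A]
    exact measure_union_le _ _
  refine le_trans h0 (add_le_add (measure_mono ?_) hAc)
  -- the deterministic part : A ⊆ target event
  intro ω hω
  have hωA : ∑ i ∈ I, a i ω ≤ 2 * (m:ℝ) * Real.sqrt ((d:ℝ) * lam) := hω
  intro μ S hSc hmin
  set Δ : ℝ := ‖μ - μstar‖ with hΔdef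
  have hΔ : 0 ≤ Δ := norm_nonneg _
  -- exchange argument
  have hex : ∀ i ∈ S \ I, ∀ j ∈ I \ S, ‖X i ω - μ‖ ≤ ‖X j ω - μ‖ := by
    intro i hi j hj
    rw [Finset.mem_sdiff] at hi hj
    have hiS : i ∈ S := hi.1
    have hjS : j ∉ S := hj.2
    have hjE : j ∉ S.erase i := fun h => hjS (Finset.mem_of_mem_erase h)
    have hSc' : (insert j (S.erase i)).card = m := by
      rw [Finset.card_insert_of_notMem hjE, Finset.card_erase_of_mem hiS, hSc]
      omega
    have h := hmin _ hSc'
    rw [Finset.sum_insert hjE, ← Finset.add_sum_erase _ _ hiS] at h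
    have h2 : ‖X i ω - μ‖^2 ≤ ‖X j ω - μ‖^2 := by linarith
    have h3 := Real.sqrt_le_sqrt h2
    rwa [Real.sqrt_sq (norm_nonneg _), Real.sqrt_sq (norm_nonneg _)] at h3
  -- swap sums over S \ I and I \ S
  have hcards : (S \ I).card = (I \ S).card := Finset.card_sdiff_comm (by rw [hSc, hIcard])
  have hcardeq : Fintype.card (S \ I : Finset (Fin n)) = Fintype.card (I \ S : Finset (Fin n)) := by
    rw [Fintype.card_coe, Fintype.card_coe]; exact hcards
  have hswap : ∑ i ∈ S \ I, ‖X i ω - μstar‖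
      ≤ (∑ j ∈ I \ S, ‖X j ω - μstar‖) + 2 * ((S \ I).card : ℝ) * Δ := by
    let e := Fintype.equivOfCardEq hcardeq
    calc ∑ i ∈ S \ I, ‖X i ω - μstar‖
        = ∑ x : (S \ I : Finset (Fin n)), ‖X x ω - μstar‖ :=
          (Finset.sum_coe_sort (S \ I) (fun i => ‖X i ω - μstar‖)).symm
      _ ≤ ∑ x : (S \ I : Finset (Fin n)), (‖X (e x) ω - μstar‖ + 2*Δ) := by
          refine Finset.sum_le_sum fun x _ => ?_
          have h1 : ‖X x ω - μstar‖ ≤ ‖X x ω - μ‖ + Δ :=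
            norm_sub_le_norm_sub_add_norm_sub _ _ _
          have h2 : ‖X x ω - μ‖ ≤ ‖X (e x) ω - μ‖ := hex _ x.2 _ (e x).2
          have h3 : ‖X (e x) ω - μ‖ ≤ ‖X (e x) ω - μstar‖ + Δ := by
            have h4 := norm_sub_le_norm_sub_add_norm_sub (X (e x) ω) μstar μ
            rwa [norm_sub_rev μstar μ] at h4
          linarith
      _ = ∑ y : (I \ S : Finset (Fin n)), (‖X y ω - μstar‖ + 2*Δ) :=
          Equiv.sum_comp e (fun y : (I \ S : Finset (Fin n)) => ‖X (y : Fin n) ω - μstar‖ + 2*Δ)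
      _ = ∑ j ∈ I \ S, (‖X j ω - μstar‖ + 2*Δ) :=
          Finset.sum_coe_sort (I \ S) (fun j => ‖X j ω - μstar‖ + 2*Δ)
      _ = (∑ j ∈ I \ S, ‖X j ω - μstar‖) + ((I \ S).card : ℝ) * (2*Δ) := by
          rw [Finset.sum_add_distrib, Finset.sum_const, nsmul_eq_mul]
      _ = (∑ j ∈ I \ S, ‖X j ω - μstar‖) + 2 * ((S \ I).card : ℝ) * Δ := by
          rw [hcards]; ring
  have hsplitS : ∑ i ∈ S, ‖X i ω - μstar‖
      = ∑ i ∈ S ∩ I, ‖X i ω - μstar‖ + ∑ i ∈ S \ I, ‖X i ω - μstar‖ :=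
    (Finset.sum_inter_add_sum_sdiff _ _ _).symm
  have hsplitI : ∑ i ∈ I, ‖X i ω - μstar‖
      = ∑ i ∈ I ∩ S, ‖X i ω - μstar‖ + ∑ i ∈ I \ S, ‖X i ω - μstar‖ :=
    (Finset.sum_inter_add_sum_sdiff _ _ _).symm
  have hIS : S ∩ I = I ∩ S := Finset.inter_comm _ _
  have hcd : ((S \ I).card : ℝ) ≤ (n:ℝ) - m := by
    have h1 : (I \ S).card ≤ n - m := by
      have hsub : I \ S ⊆ Sᶜ := fun x hx => Finset.mem_compl.mpr (Finset.mem_sdiff.mp hx).2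
      have := Finset.card_le_card hsub
      rwa [Finset.card_compl, Fintype.card_fin, hSc] at this
    rw [hcards]
    calc ((I \ S).card : ℝ) ≤ ((n - m : ℕ) : ℝ) := Nat.cast_le.mpr h1
      _ = (n:ℝ) - m := by rw [Nat.cast_sub hmn]
  have hωA' : ∑ i ∈ I, a i ω ≤ 2 * (m:ℝ) * Real.sqrt ((d:ℝ) * lam) := hωA
  simp only [ha] at hωA'
  have hsum_main : ∑ i ∈ S, ‖X i ω - μstar‖
      ≤ 2 * (m:ℝ) * Real.sqrt ((d:ℝ) * lam) + 2 * ((n:ℝ) - m) * Δ := by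
    have hmul : 2 * ((S \ I).card : ℝ) * Δ ≤ 2 * ((n:ℝ) - m) * Δ := by nlinarith
    calc ∑ i ∈ S, ‖X i ω - μstar‖
        = ∑ i ∈ S ∩ I, ‖X i ω - μstar‖ + ∑ i ∈ S \ I, ‖X i ω - μstar‖ := hsplitS
      _ ≤ ∑ i ∈ I ∩ S, ‖X i ω - μstar‖ + ((∑ j ∈ I \ S, ‖X j ω - μstar‖)
            + 2 * ((S \ I).card : ℝ) * Δ) := by rw [← hIS]; exact add_le_add_right hswap _
      _ = (∑ i ∈ I, ‖X i ω - μstar‖) + 2 * ((S \ I).card : ℝ) * Δ := by rw [hsplitI]; ring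
      _ ≤ 2 * (m:ℝ) * Real.sqrt ((d:ℝ) * lam) + 2 * ((n:ℝ) - m) * Δ := by
          have := hωA'
          linarith
  -- final bound
  have hmean_eq : ((m:ℝ))⁻¹ • (∑ i ∈ S, X i ω) - μstar
      = ((m:ℝ))⁻¹ • (∑ i ∈ S, (X i ω - μstar)) := by
    rw [Finset.sum_sub_distrib, smul_sub]
    congr 1
    rw [Finset.sum_const, hSc, ← Nat.cast_smul_eq_nsmul ℝ, smul_smul,
      inv_mul_cancel₀ (ne_of_gt hmR), one_smul]
  show ‖((m:ℝ))⁻¹ • (∑ i ∈ S, X i ω) - μstar‖ ≤ κ * Δ + 2 * Real.sqrt ((d:ℝ) * lam)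
  calc ‖((m:ℝ))⁻¹ • (∑ i ∈ S, X i ω) - μstar‖
      = ((m:ℝ))⁻¹ * ‖∑ i ∈ S, (X i ω - μstar)‖ := by
        rw [hmean_eq, norm_smul, Real.norm_eq_abs, abs_inv, Nat.abs_cast]
    _ ≤ ((m:ℝ))⁻¹ * ∑ i ∈ S, ‖X i ω - μstar‖ :=
        mul_le_mul_of_nonneg_left (norm_sum_le _ _) (by positivity)
    _ ≤ ((m:ℝ))⁻¹ * (2 * (m:ℝ) * Real.sqrt ((d:ℝ) * lam) + 2 * ((n:ℝ) - m) * Δ) :=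
        mul_le_mul_of_nonneg_left hsum_main (by positivity)
    _ ≤ κ * Δ + 2 * Real.sqrt ((d:ℝ) * lam) := by
        rw [hκ, mul_add]
        have h1 : ((m:ℝ))⁻¹ * (2 * (m:ℝ) * Real.sqrt ((d:ℝ) * lam))
            = 2 * Real.sqrt ((d:ℝ) * lam) := by
          calc ((m:ℝ))⁻¹ * (2 * (m:ℝ) * Real.sqrt ((d:ℝ) * lam))
              = ((m:ℝ)⁻¹ * (m:ℝ)) * (2 * Real.sqrt ((d:ℝ) * lam)) := by ring
            _ = 2 * Real.sqrt ((d:ℝ) * lam) := by rw [inv_mul_cancel₀ hmR.ne', one_mul]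
        have hq : α * (2 * (1 - α) / α) = 2 * (1 - α) := by field_simp
        have h2 : ((m:ℝ))⁻¹ * (2 * ((n:ℝ) - m) * Δ) ≤ 2 * (1 - α) / α * Δ := by
          rw [inv_mul_le_iff₀ hmR]
          have e1 : (m:ℝ) * (2 * (1 - α) / α * Δ) = ((m:ℝ) * Δ) * (2*(1-α)) / α := by ring
          rw [e1, le_div_iff₀ hα0]
          nlinarith [mul_nonneg hΔ (sub_nonneg.mpr hαnm)]
        linarith
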